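/- Let f(x) = ∑_{i=1}^{d} ℓ(⟨a_i, x⟩ − b_i) where ℓ(t) = log(1 + eᵗ) is the logistic loss, and define the Fisher matrix H(x) := ∑_{i=1}^{d} ℓ′(⟨a_i,x⟩−b_i)² a_i a_iᵀ and the Gauss-Newton matrix B := ∑_{i=1}^{d} a_i a_iᵀ. Then the operator norm of ∇²f(x) − H(x) measured in the B-norm satisfies ‖∇²f(x) − H(x)‖ ≤ f(x), i.e., −f(x)·B ⪯ ∇²f(x) − H(x) ⪯ f(x)·B. -/

import Mathlib

open scoped RealInnerProductSpace

/-- The derivative of the logistic loss `ℓ(t) = log (1 + exp t)`. -/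
noncomputable def logisticDeriv (t : ℝ) : ℝ := Real.exp t / (1 + Real.exp t)

lemma one_add_exp_pos (t : ℝ) : (0:ℝ) < 1 + Real.exp t := by positivity

lemma hasDerivAt_ell (t : ℝ) :
    HasDerivAt (fun t => Real.log (1 + Real.exp t)) (logisticDeriv t) t := by
  have h1 := one_add_exp_pos t
  simpa [logisticDeriv] using ((Real.hasDerivAt_exp t).const_add 1).log h1.ne'

lemma hasDerivAt_logisticDeriv (t : ℝ) :
    HasDerivAt logisticDeriv (logisticDeriv t * (1 - logisticDeriv t)) t := by
  have h1 := one_add_exp_pos t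
  have := (Real.hasDerivAt_exp t).fun_div ((Real.hasDerivAt_exp t).const_add 1) h1.ne'
  refine this.congr_deriv ?_
  unfold logisticDeriv
  field_simp

lemma logisticDeriv_pos (t : ℝ) : 0 < logisticDeriv t := by
  have := one_add_exp_pos t
  unfold logisticDeriv; positivity

lemma logisticDeriv_lt_one (t : ℝ) : logisticDeriv t < 1 := by
  have h1 := one_add_exp_pos t
  rw [logisticDeriv, div_lt_one h1]
  linarith

lemma logisticDeriv_le_ell (t : ℝ) : logisticDeriv t ≤ Real.log (1 + Real.exp t) := by
  have h1 := one_add_exp_pos t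
  have h2 : Real.log (1 + Real.exp t)⁻¹ ≤ (1 + Real.exp t)⁻¹ - 1 :=
    Real.log_le_sub_one_of_pos (by positivity)
  rw [Real.log_inv] at h2
  have : logisticDeriv t = 1 - (1 + Real.exp t)⁻¹ := by
    rw [logisticDeriv]; field_simp; ring
  linarith

lemma abs_term_le (t : ℝ) :
    |logisticDeriv t * (1 - logisticDeriv t) - logisticDeriv t ^ 2|
      ≤ Real.log (1 + Real.exp t) := by
  have h0 := logisticDeriv_pos t
  have h1 := logisticDeriv_lt_one t
  have h2 := logisticDeriv_le_ell t
  rw [abs_le]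
  constructor <;> nlinarith

theorem logistic_fisher_hessian_approx {n d : ℕ}
    (a : Fin d → EuclideanSpace ℝ (Fin n)) (b : Fin d → ℝ)
    (f : EuclideanSpace ℝ (Fin n) → ℝ)
    (hf : f = fun x => ∑ i, Real.log (1 + Real.exp (⟪a i, x⟫ - b i)))
    (hBposdef : ∀ h : EuclideanSpace ℝ (Fin n), h ≠ 0 → 0 < ∑ i, ⟪a i, h⟫ ^ 2) :
    ∀ x h : EuclideanSpace ℝ (Fin n),
      |iteratedFDeriv ℝ 2 f x ![h, h] -
          ∑ i, logisticDeriv (⟪a i, x⟫ - b i) ^ 2 * ⟪a i, h⟫ ^ 2|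
        ≤ f x * ∑ i, ⟪a i, h⟫ ^ 2 := by
  intro x h
  -- first derivative
  have hc : ∀ (i : Fin d) (y : EuclideanSpace ℝ (Fin n)),
      HasFDerivAt (fun y : EuclideanSpace ℝ (Fin n) => ⟪a i, y⟫ - b i) (innerSL ℝ (a i)) y := fun i y =>
    ((innerSL ℝ (a i)).hasFDerivAt).sub_const (b i)
  have hd1 : ∀ y : EuclideanSpace ℝ (Fin n), HasFDerivAt f
      (∑ i, logisticDeriv (⟪a i, y⟫ - b i) • innerSL ℝ (a i)) y := by
    intro y
    rw [hf]
    exact HasFDerivAt.fun_sum fun i _ =>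
      by have := (hasDerivAt_ell (⟪a i, y⟫ - b i)).comp_hasFDerivAt y (hc i y); exact this
  have hfder : fderiv ℝ f = fun y =>
      ∑ i, logisticDeriv (⟪a i, y⟫ - b i) • innerSL ℝ (a i) :=
    funext fun y => (hd1 y).fderiv
  -- second derivative
  have hd2 : HasFDerivAt (fun y : EuclideanSpace ℝ (Fin n) => ∑ i, logisticDeriv (⟪a i, y⟫ - b i) • innerSL ℝ (a i))
      (∑ i, (logisticDeriv (⟪a i, x⟫ - b i) * (1 - logisticDeriv (⟪a i, x⟫ - b i))) •
        ((innerSL ℝ (a i)).smulRight (innerSL ℝ (a i)))) x := by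
    apply HasFDerivAt.fun_sum
    intro i _
    have hs : HasFDerivAt (fun y : EuclideanSpace ℝ (Fin n) => logisticDeriv (⟪a i, y⟫ - b i))
        ((logisticDeriv (⟪a i, x⟫ - b i) * (1 - logisticDeriv (⟪a i, x⟫ - b i))) •
          (innerSL ℝ (a i) : EuclideanSpace ℝ (Fin n) →L[ℝ] ℝ)) x :=
      by have := (hasDerivAt_logisticDeriv (⟪a i, x⟫ - b i)).comp_hasFDerivAt x (hc i x); exact this
    have := hs.smul_const (innerSL ℝ (a i) : EuclideanSpace ℝ (Fin n) →L[ℝ] ℝ)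
    convert this using 1
    ext v w
    simp [smul_smul, mul_comm, mul_assoc, mul_left_comm]
  have key : iteratedFDeriv ℝ 2 f x ![h, h] =
      ∑ i, (logisticDeriv (⟪a i, x⟫ - b i) * (1 - logisticDeriv (⟪a i, x⟫ - b i))) *
        ⟪a i, h⟫ ^ 2 := by
    rw [iteratedFDeriv_two_apply, hfder]
    rw [hd2.fderiv]
    simp [pow_two, mul_assoc]
  rw [key, hf]
  simp only
  rw [← Finset.sum_sub_distrib]
  have habs : |∑ i, (logisticDeriv (⟪a i, x⟫ - b i) * (1 - logisticDeriv (⟪a i, x⟫ - b i)) *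
        ⟪a i, h⟫ ^ 2 - logisticDeriv (⟪a i, x⟫ - b i) ^ 2 * ⟪a i, h⟫ ^ 2)|
      ≤ ∑ i, Real.log (1 + Real.exp (⟪a i, x⟫ - b i)) * ⟪a i, h⟫ ^ 2 := by
    refine (Finset.abs_sum_le_sum_abs _ _).trans (Finset.sum_le_sum fun i _ => ?_)
    rw [← sub_mul, abs_mul, abs_pow, sq_abs]
    exact mul_le_mul_of_nonneg_right (abs_term_le _) (sq_nonneg _)
  refine habs.trans ?_
  rw [Finset.sum_mul]
  refine Finset.sum_le_sum fun i _ => ?_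
  have hlog : (0:ℝ) ≤ Real.log (1 + Real.exp (⟪a i, x⟫ - b i)) :=
    Real.log_nonneg (by nlinarith [Real.exp_pos (⟪a i, x⟫ - b i)])
  exact mul_le_mul_of_nonneg_left
    (Finset.single_le_sum (f := fun j => ⟪a j, h⟫ ^ 2) (fun j _ => sq_nonneg _) (Finset.mem_univ i)) hlog
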